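/- If A ⊂_t B and A ⊂_t C, then A ⊂_t (B ∩ C), where ∩ is the Torra intersection. -/

import Mathlib

/-- Supremum (maximum) of a multiset of reals in `[0,1]`, defaulting to `0`. -/
noncomputable def msup (A : Multiset ℝ) : ℝ := A.toList.foldr max 0

/-- Infimum (minimum) of a multiset of reals in `[0,1]`, defaulting to `1`. -/
noncomputable def minf (A : Multiset ℝ) : ℝ := A.toList.foldr min 1

/-- Mean of a multiset of reals. -/
noncomputable def mmean (A : Multiset ℝ) : ℝ := A.sum / A.card

/-- The elements of a multiset sorted in descending order. -/
noncomputable def dsort (A : Multiset ℝ) : List ℝ := (A.sort (· ≤ ·)).reverse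

/-- `A ⊂ₛ B`: `|A| ≥ |B|` and the `i`-th largest element of `B` is at least the
`i`-th largest element of `A`, for `i ≤ |B|`. -/
noncomputable def subS (A B : Multiset ℝ) : Prop :=
  B.card ≤ A.card ∧ ∀ i < B.card, (dsort A).getD i 0 ≤ (dsort B).getD i 0

/-- `A ⊂ₜ B`: `|A| < |B|` and the `i`-th largest element of `B` is at least the
`i`-th largest element of `A`, for `i ≤ |A|`. -/
noncomputable def subT (A B : Multiset ℝ) : Prop :=
  A.card < B.card ∧ ∀ i < A.card, (dsort A).getD i 0 ≤ (dsort B).getD i 0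

/-- Torra intersection of two hesitant fuzzy elements (as multisets). -/
noncomputable def tInter (A B : Multiset ℝ) : Multiset ℝ :=
  (A + B).filter (fun h => h ≤ min (msup A) (msup B))

/-- Torra union of two hesitant fuzzy elements (as multisets). -/
noncomputable def tUnion (A B : Multiset ℝ) : Multiset ℝ :=
  (A + B).filter (fun h => max (minf A) (minf B) ≤ h)

lemma getD_le_of_sublist {l l' : List ℝ} (h : List.Sublist l l') (hs : l'.Pairwise (· ≥ ·)) :
    ∀ i < l.length, l.getD i 0 ≤ l'.getD i 0 := by
  induction h with
  | slnil => intro i hi; simp at hi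
  | @cons l₁ l₂ a h ih =>
    intro i hi
    have hl2 : i < l₂.length := lt_of_lt_of_le hi h.length_le
    refine (ih (List.Pairwise.of_cons hs) i hi).trans ?_
    cases i with
    | zero =>
      rw [List.getD_cons_zero, List.getD_eq_getElem _ _ hl2]
      exact List.rel_of_pairwise_cons hs (l₂.getElem_mem hl2)
    | succ j =>
      rw [List.getD_cons_succ, List.getD_eq_getElem _ _ hl2,
        List.getD_eq_getElem _ _ (Nat.lt_of_succ_lt hl2)]
      exact (List.pairwise_iff_getElem.mp (List.Pairwise.of_cons hs)) j (j+1)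
        (Nat.lt_of_succ_lt hl2) hl2 (Nat.lt_succ_self j)
  | @cons_cons l₁ l₂ a h ih =>
    intro i hi
    cases i with
    | zero => simp
    | succ j =>
      simp only [List.getD_cons_succ]
      exact ih (List.Pairwise.of_cons hs) j (Nat.lt_of_succ_lt_succ hi)

lemma dsort_pairwise (M : Multiset ℝ) : (dsort M).Pairwise (· ≥ ·) := by
  have := Multiset.pairwise_sort M (· ≤ ·)
  rw [dsort, List.pairwise_reverse]
  exact this

lemma dsort_sublist {M N : Multiset ℝ} (h : M ≤ N) : List.Sublist (dsort M) (dsort N) := by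
  apply List.Sublist.reverse
  apply List.sublist_of_subperm_of_pairwise _ (Multiset.pairwise_sort M _) (Multiset.pairwise_sort N _)
  rw [← Multiset.coe_le, Multiset.sort_eq, Multiset.sort_eq]
  exact h

lemma getD_le_of_le {M N : Multiset ℝ} (h : M ≤ N) :
    ∀ i < M.card, (dsort M).getD i 0 ≤ (dsort N).getD i 0 := by
  intro i hi
  have hlen : (dsort M).length = M.card := by simp [dsort]
  exact getD_le_of_sublist (dsort_sublist h) (dsort_pairwise N) i (by omega)

lemma le_foldr_max {l : List ℝ} {x : ℝ} (h : x ∈ l) : x ≤ l.foldr max 0 := by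
  induction l with
  | nil => simp at h
  | cons a l ih =>
    simp only [List.foldr_cons, le_max_iff]
    rcases List.mem_cons.mp h with h | h
    · exact Or.inl (le_of_eq h)
    · exact Or.inr (ih h)

lemma le_msup {A : Multiset ℝ} {x : ℝ} (hx : x ∈ A) : x ≤ msup A :=
  le_foldr_max (by rwa [Multiset.mem_toList])

lemma subT_of_le {A M N : Multiset ℝ} (h : subT A M) (hle : M ≤ N) : subT A N :=
  ⟨h.1.trans_le (Multiset.card_le_card hle),
   fun i hi => (h.2 i hi).trans (getD_le_of_le hle i (hi.trans h.1))⟩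

theorem stmt15 (A B C : Multiset ℝ) (hA : A ≠ 0) (hB : B ≠ 0) (hC : C ≠ 0)
    (hA1 : ∀ x ∈ A, x ∈ Set.Icc (0:ℝ) 1) (hB1 : ∀ x ∈ B, x ∈ Set.Icc (0:ℝ) 1)
    (hC1 : ∀ x ∈ C, x ∈ Set.Icc (0:ℝ) 1)
    (hab : subT A B) (hac : subT A C) :
    subT A (tInter B C) := by
  rcases le_total (msup B) (msup C) with h | h
  · refine subT_of_le hab ?_
    have hfB : B.filter (fun h => h ≤ min (msup B) (msup C)) = B :=
      Multiset.filter_eq_self.mpr (fun x hx => le_min (le_msup hx) ((le_msup hx).trans h))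
    rw [tInter, Multiset.filter_add, hfB]
    exact Multiset.le_add_right _ _
  · refine subT_of_le hac ?_
    have hfC : C.filter (fun h => h ≤ min (msup B) (msup C)) = C :=
      Multiset.filter_eq_self.mpr (fun x hx => le_min ((le_msup hx).trans h) (le_msup hx))
    rw [tInter, Multiset.filter_add, hfC]
    exact Multiset.le_add_left _ _
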